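/- Let k be a field, m ≥ 2 and d ≥ 2 integers, and a = (a_1, …, a_{m−1}) ∈ k^{m−1}. For every j ∈ {1, …, m}, the only polynomial in the ideal ⟨g_1, …, g_{m−1}⟩ ⊆ k[x_1, …, x_m] that depends on the single variable x_j alone is the zero polynomial; that is, ⟨g_1, …, g_{m−1}⟩ ∩ k[x_j] = {0}. -/
import Mathlib


open scoped BigOperators

/-- The polynomial `g_j = x_j^d − x_{j+1}^d − a_j` (0-indexed). -/
noncomputable def gPoly {k : Type*} [CommRing k] (m d : ℕ) (a : Fin (m - 1) → k)
    (j : Fin (m - 1)) : MvPolynomial (Fin m) k :=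
  MvPolynomial.X ⟨j.1, by have := j.isLt; omega⟩ ^ d -
    MvPolynomial.X ⟨j.1 + 1, by have := j.isLt; omega⟩ ^ d -
    MvPolynomial.C (a j)

/-- The partial sum `A_i = ∑_{k ≥ i} a_k`. -/
def partialSum {k : Type*} [AddCommMonoid k] {n : ℕ} (a : Fin n → k) (i : Fin n) : k :=
  ∑ t ∈ Finset.Ici i, a t

/-- Iterated sequence: `iterSeq y step 0 = y`, `iterSeq y step (t+1) = step t (iterSeq y step t)`. -/
noncomputable def iterSeq {Ω : Type*} (y : Ω) (step : ℕ → Ω → Ω) : ℕ → Ω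
  | 0 => y
  | t + 1 => step t (iterSeq y step t)

theorem statement6 {k : Type*} [Field k] (m d : ℕ) (hm : 2 ≤ m) (hd : 2 ≤ d)
    (a : Fin (m - 1) → k) (j : Fin m)
    (p : MvPolynomial (Fin m) k)
    (hp : p ∈ Ideal.span (Set.range (gPoly m d a)))
    (hsupp : p ∈ MvPolynomial.supported k ({j} : Set (Fin m))) :
    p = 0 := by
  classical
  have hd0 : 0 < d := by omega
  let Ω := AlgebraicClosure (RatFunc k)
  have hroot : ∀ x : Ω, ∃ z : Ω, z ^ d = x := fun x => IsAlgClosed.exists_pow_nat_eq x hd0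
  choose r hr using hroot
  set y : Ω := algebraMap (RatFunc k) Ω (algebraMap (Polynomial k) (RatFunc k) Polynomial.X)
    with hy
  have hyt : Transcendental k y := by
    rw [transcendental_algebraMap_iff (algebraMap (RatFunc k) Ω).injective,
      transcendental_algebraMap_iff (IsFractionRing.injective (Polynomial k) (RatFunc k))]
    exact Polynomial.transcendental_X k
  set a' : ℕ → Ω := fun n => if h : n < m - 1 then algebraMap k Ω (a ⟨n, h⟩) else 0 with ha'
  set up : ℕ → Ω := iterSeq y (fun t u => r (u ^ d - a' (j.1 + t))) with hup
  set dn : ℕ → Ω := iterSeq y (fun t u => r (u ^ d + a' (j.1 - 1 - t))) with hdn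
  set c : Fin m → Ω := fun i => if j.1 ≤ i.1 then up (i.1 - j.1) else dn (j.1 - i.1) with hc
  have hcj : c j = y := by simp [hc, hup, iterSeq]
  -- each generator vanishes
  have hg : ∀ i : Fin (m - 1), MvPolynomial.aeval c (gPoly m d a i) = 0 := by
    intro i
    have him : i.1 < m - 1 := i.isLt
    have hgi : MvPolynomial.aeval c (gPoly m d a i) =
        c ⟨i.1, by omega⟩ ^ d - c ⟨i.1 + 1, by omega⟩ ^ d - algebraMap k Ω (a i) := by
      simp [gPoly]
    rw [hgi]
    have hai : a' i.1 = algebraMap k Ω (a i) := by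
      have h0 : a' i.1 = if h : i.1 < m - 1 then algebraMap k Ω (a ⟨i.1, h⟩) else 0 := rfl
      rw [h0, dif_pos him]
    rcases le_or_gt j.1 i.1 with hji | hji
    · have h1 : c ⟨i.1, by omega⟩ = up (i.1 - j.1) := by
        simp only [hc]; rw [if_pos hji]
      have h2 : c ⟨i.1 + 1, by omega⟩ = up (i.1 - j.1 + 1) := by
        simp only [hc]
        rw [if_pos (by omega : j.1 ≤ i.1 + 1)]
        congr 1 <;> omega
      rw [h1, h2]
      have : up (i.1 - j.1 + 1) ^ d = up (i.1 - j.1) ^ d - a' (j.1 + (i.1 - j.1)) := by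
        rw [hup]; exact hr _
      rw [this]
      have : j.1 + (i.1 - j.1) = i.1 := by omega
      rw [this, hai]; ring
    · set s : ℕ := j.1 - i.1 - 1 with hs
      have h2 : c ⟨i.1 + 1, by omega⟩ = dn s := by
        simp only [hc]
        rcases le_or_gt j.1 (i.1 + 1) with h | h
        · have hsj : i.1 + 1 = j.1 := by omega
          rw [if_pos h]
          have : i.1 + 1 - j.1 = 0 := by omega
          rw [this]
          have : s = 0 := by omega
          rw [this]
          rfl
        · rw [if_neg (by omega)]
          congr 1 <;> omega
      have h1 : c ⟨i.1, by omega⟩ = dn (s + 1) := by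
        simp only [hc]
        rw [if_neg (by omega)]
        congr 1 <;> omega
      rw [h1, h2]
      have hpow : dn (s + 1) ^ d = dn s ^ d + a' (j.1 - 1 - s) := by
        rw [hdn]; exact hr _
      rw [hpow]
      have : j.1 - 1 - s = i.1 := by omega
      rw [this, hai]; ring
  -- p maps to zero
  have hp0 : MvPolynomial.aeval c p = 0 := by
    have hle : Ideal.span (Set.range (gPoly m d a)) ≤
        RingHom.ker (MvPolynomial.aeval c : MvPolynomial (Fin m) k →ₐ[k] Ω) := by
      rw [Ideal.span_le]
      rintro x ⟨i, rfl⟩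
      exact hg i
    exact hle hp
  -- p depends only on x_j
  rw [MvPolynomial.supported_eq_range_rename, AlgHom.mem_range] at hsupp
  obtain ⟨q, rfl⟩ := hsupp
  rw [MvPolynomial.aeval_rename] at hp0
  have hceq : (c ∘ (Subtype.val : ({j} : Set (Fin m)) → Fin m)) = fun _ => y := by
    funext x
    have : (x : Fin m) = j := x.2
    simp [this, hcj]
  rw [hceq] at hp0
  have hind : AlgebraicIndependent k (fun _ : ({j} : Set (Fin m)) => y) := by
    rw [algebraicIndependent_unique_type_iff]
    exact hyt
  have hq : q = 0 := hind (by rw [hp0, map_zero])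
  rw [hq, map_zero]
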